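/- The Hermite–Padé identity for binomial functions holds: ₂F₁(−ν−n, −m; −m−n; x) − (1−x)^ν · ₂F₁(ν−m, −n; −m−n; x) = (−1)^m · [C(n+ν, m+n+1)/C(m+n, m)] · x^{m+n+1} · ₂F₁(−ν+m+1, n+1; m+n+2; x), as an identity of formal power series in x over ℝ, for every real ν and nonnegative integers m, n (with ν not a negative integer so the generalized binomial coefficient C(n+ν, m+n+1) makes sense). -/

import Mathlib

open Finset PowerSeries

/-- Pochhammer symbol `(a)_k = a(a+1)⋯(a+k-1)`. -/
noncomputable def poch (a : ℝ) (k : ℕ) : ℝ := ∏ i ∈ Finset.range k, (a + i)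

/-- Generalized binomial coefficient `C(a,k) = a(a-1)⋯(a-k+1)/k!`. -/
noncomputable def gchoose (a : ℝ) (k : ℕ) : ℝ :=
  (∏ i ∈ Finset.range k, (a - i)) / k.factorial

/-- The (formal) hypergeometric series `₂F₁(a, b; c; x) ∈ ℝ⟦x⟧`. -/
noncomputable def hypSeries (a b c : ℝ) : PowerSeries ℝ :=
  PowerSeries.mk fun k => poch a k * poch b k / (poch c k * k.factorial)

/-- The formal binomial series `(1-x)^ν = ∑_k C(ν,k)(-1)^k x^k ∈ ℝ⟦x⟧`. -/
noncomputable def binomOneSub (ν : ℝ) : PowerSeries ℝ :=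
  PowerSeries.mk fun k => gchoose ν k * (-1) ^ k

namespace HP

@[simp] lemma poch_zero (a : ℝ) : poch a 0 = 1 := by simp [poch]

lemma poch_succ (a : ℝ) (k : ℕ) : poch a (k+1) = poch a k * (a + k) := by
  simp [poch, Finset.prod_range_succ]

lemma poch_ne_zero {a : ℝ} {k : ℕ} (h : ∀ i : ℕ, i < k → a + i ≠ 0) : poch a k ≠ 0 := by
  rw [poch, Finset.prod_ne_zero_iff]
  exact fun i hi => h i (Finset.mem_range.mp hi)

lemma poch_neg_nat_eq_zero {q k : ℕ} (h : q < k) : poch (-(q:ℝ)) k = 0 := by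
  rw [poch]
  apply Finset.prod_eq_zero (Finset.mem_range.mpr h)
  simp

lemma poch_neg_nat_ne_zero {q k : ℕ} (h : k ≤ q) : poch (-(q:ℝ)) k ≠ 0 := by
  apply poch_ne_zero
  intro i hi
  have hiq : (i:ℝ) ≠ (q:ℝ) := Nat.cast_injective.ne (by omega)
  intro hc
  exact hiq (by linarith)

noncomputable def hypCoeff (a b c : ℝ) (k : ℕ) : ℝ :=
  poch a k * poch b k / (poch c k * k.factorial)

lemma coeff_hypSeries (a b c : ℝ) (k : ℕ) :
    PowerSeries.coeff k (hypSeries a b c) = hypCoeff a b c k := by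
  simp [hypSeries, hypCoeff]

@[simp] lemma hypCoeff_zero (a b c : ℝ) : hypCoeff a b c 0 = 1 := by
  simp [hypCoeff]

noncomputable def bc (ν : ℝ) (k : ℕ) : ℝ := gchoose ν k * (-1)^k

lemma coeff_binom (ν : ℝ) (k : ℕ) :
    PowerSeries.coeff k (binomOneSub ν) = bc ν k := by
  simp [binomOneSub, bc]

@[simp] lemma gchoose_zero (a : ℝ) : gchoose a 0 = 1 := by simp [gchoose]

@[simp] lemma bc_zero (ν : ℝ) : bc ν 0 = 1 := by simp [bc]

lemma gchoose_succ (a : ℝ) (k : ℕ) :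
    gchoose a (k+1) * (k+1) = gchoose a k * (a - k) := by
  rw [gchoose, gchoose, Finset.prod_range_succ, Nat.factorial_succ]
  have h1 : ((k+1).factorial : ℝ) ≠ 0 := by positivity
  have h2 : ((k).factorial : ℝ) ≠ 0 := by positivity
  field_simp
  push_cast
  ring

lemma bc_succ (ν : ℝ) (k : ℕ) :
    ((k:ℝ)+1) * bc ν (k+1) = ((k:ℝ) - ν) * bc ν k := by
  have h := gchoose_succ ν k
  simp only [bc, pow_succ]
  linear_combination (-(-1:ℝ)^k) * h

lemma hyp_rec_of (a b c : ℝ) (k : ℕ) (h1 : poch c k ≠ 0) (h2 : c + k ≠ 0) :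
    ((k:ℝ)+1) * ((k:ℝ) + c) * hypCoeff a b c (k+1)
      = ((k:ℝ)+a) * ((k:ℝ)+b) * hypCoeff a b c k := by
  have hk1 : ((k:ℝ)+1) ≠ 0 := by positivity
  have hf : ((k.factorial : ℕ) : ℝ) ≠ 0 := by positivity
  rw [hypCoeff, hypCoeff, poch_succ a, poch_succ b, poch_succ c, Nat.factorial_succ]
  push_cast
  rw [mul_div_assoc', mul_div_assoc', div_eq_div_iff (by
      exact mul_ne_zero (mul_ne_zero h1 h2) (mul_ne_zero hk1 hf)) (mul_ne_zero h1 hf)]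
  ring

/-- terminating-case recurrence for hypergeometric coefficients -/
lemma hyp_rec_term (a : ℝ) (q M : ℕ) (hqM : q ≤ M) (k : ℕ) :
    ((k:ℝ)+1) * ((k:ℝ) + (-(M:ℝ))) * hypCoeff a (-(q:ℝ)) (-(M:ℝ)) (k+1)
      = ((k:ℝ)+a) * ((k:ℝ) + (-(q:ℝ))) * hypCoeff a (-(q:ℝ)) (-(M:ℝ)) k := by
  rcases lt_or_ge k M with hk | hk
  · apply hyp_rec_of
    · exact poch_neg_nat_ne_zero (le_of_lt hk)
    · have : (k:ℝ) ≠ (M:ℝ) := Nat.cast_injective.ne (by omega)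
      intro hc; exact this (by linarith)
  · have hb1 : poch (-(q:ℝ)) (k+1) = 0 := poch_neg_nat_eq_zero (by omega)
    rcases eq_or_lt_of_le (le_trans hqM hk : q ≤ k) with hqk | hqk
    · rw [hypCoeff, hypCoeff, hb1]
      rw [← hqk]
      simp
    · have hb0 : poch (-(q:ℝ)) k = 0 := poch_neg_nat_eq_zero hqk
      rw [hypCoeff, hypCoeff, hb0, hb1]
      simp

/-- nonvanishing-c recurrence -/
lemma hyp_rec_pos (a b c : ℝ) (hc : ∀ i : ℕ, c + i ≠ 0) (k : ℕ) :
    ((k:ℝ)+1) * ((k:ℝ) + c) * hypCoeff a b c (k+1)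
      = ((k:ℝ)+a) * ((k:ℝ)+b) * hypCoeff a b c k :=
  hyp_rec_of a b c k (poch_ne_zero (fun i _ => hc i)) (hc k)

end HP
namespace HP

lemma coeff_derivativeFun (f : PowerSeries ℝ) (n : ℕ) :
    PowerSeries.coeff n (derivativeFun f) = PowerSeries.coeff (n + 1) f * (n + 1) :=
  coeff_derivative f n

noncomputable def Dop (a b c : ℝ) (y : PowerSeries ℝ) : PowerSeries ℝ :=
  PowerSeries.X * (1 - PowerSeries.X) * derivativeFun (derivativeFun y)
    + (PowerSeries.C c - PowerSeries.C (a+b+1) * PowerSeries.X) * derivativeFun y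
    - PowerSeries.C (a*b) * y

private lemma coeff_Dop_aux (c' s p : ℝ) (y : PowerSeries ℝ) (k : ℕ) :
    PowerSeries.coeff k
      (PowerSeries.X ^ 1 * derivativeFun (derivativeFun y)
        - PowerSeries.X ^ 2 * derivativeFun (derivativeFun y)
        + PowerSeries.C c' * derivativeFun y
        - PowerSeries.C s * (PowerSeries.X ^ 1 * derivativeFun y)
        - PowerSeries.C p * y)
      = ((k:ℝ)+1) * ((k:ℝ)+c') * PowerSeries.coeff (k+1) y
        - ((k:ℝ)*((k:ℝ)-1) + s*(k:ℝ) + p) * PowerSeries.coeff k y := by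
  simp only [map_add, map_sub, PowerSeries.coeff_X_pow_mul', PowerSeries.coeff_C_mul,
    coeff_derivativeFun]
  rcases k with _ | k
  · norm_num
  rcases k with _ | k
  · norm_num; ring
  · have h1 : (1:ℕ) ≤ k + 1 + 1 := by omega
    have h2 : (2:ℕ) ≤ k + 1 + 1 := by omega
    rw [if_pos h1, if_pos h2, if_pos h1]
    have e1 : k + 1 + 1 - 1 = k + 1 := by omega
    have e2 : k + 1 + 1 - 2 = k := by omega
    rw [e1, e2]
    push_cast
    ring

lemma coeff_Dop (a b c : ℝ) (y : PowerSeries ℝ) (k : ℕ) :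
    PowerSeries.coeff k (Dop a b c y)
      = ((k:ℝ)+1) * ((k:ℝ)+c) * PowerSeries.coeff (k+1) y
        - ((k:ℝ)+a) * ((k:ℝ)+b) * PowerSeries.coeff k y := by
  have hd : Dop a b c y =
      PowerSeries.X ^ 1 * derivativeFun (derivativeFun y)
        - PowerSeries.X ^ 2 * derivativeFun (derivativeFun y)
        + PowerSeries.C c * derivativeFun y
        - PowerSeries.C (a+b+1) * (PowerSeries.X ^ 1 * derivativeFun y)
        - PowerSeries.C (a*b) * y := by
    rw [Dop]; ring
  rw [hd, coeff_Dop_aux]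
  ring

lemma Dop_eq_zero_iff (a b c : ℝ) (y : PowerSeries ℝ) :
    Dop a b c y = 0 ↔ ∀ k : ℕ,
      ((k:ℝ)+1) * ((k:ℝ)+c) * PowerSeries.coeff (k+1) y
        = ((k:ℝ)+a) * ((k:ℝ)+b) * PowerSeries.coeff k y := by
  constructor
  · intro h k
    have := congrArg (PowerSeries.coeff k) h
    rw [coeff_Dop] at this
    simp only [map_zero] at this
    linarith
  · intro h
    ext k
    rw [coeff_Dop, map_zero, h k]
    ring

lemma binom_ODE (ν : ℝ) :
    (1 - PowerSeries.X) * derivativeFun (binomOneSub ν)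
      = PowerSeries.C (-ν) * binomOneSub ν := by
  ext k
  have h1 : (1 - PowerSeries.X) * derivativeFun (binomOneSub ν)
      = derivativeFun (binomOneSub ν) - PowerSeries.X ^ 1 * derivativeFun (binomOneSub ν) := by
    ring
  rw [h1]
  simp only [map_sub, PowerSeries.coeff_X_pow_mul', PowerSeries.coeff_C_mul,
    coeff_derivativeFun, coeff_binom]
  rcases k with _ | k
  · norm_num
    have := bc_succ ν 0
    rw [bc_zero] at this
    push_cast at this
    linarith [this]
  · rw [if_pos (by omega : (1:ℕ) ≤ k + 1)]
    have e1 : k + 1 - 1 = k := by omega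
    rw [e1]
    have hb2 := bc_succ ν (k+1)
    have hb1 := bc_succ ν k
    push_cast at hb2 hb1 ⊢
    linarith

end HP
namespace HP

lemma derivative_eq (f : PowerSeries ℝ) : (d⁄dX ℝ) f = derivativeFun f := rfl

lemma one_sub_X_ne_zero : (1 - PowerSeries.X : PowerSeries ℝ) ≠ 0 := by
  intro h
  have := congrArg (PowerSeries.constantCoeff) h
  simp at this

lemma Dop_mul_binom (a b c : ℝ) (u : PowerSeries ℝ)
    (hu : Dop (c-a) (c-b) c u = 0) :
    Dop a b c (binomOneSub (c-a-b) * u) = 0 := by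
  set B := binomOneSub (c-a-b) with hBdef
  have hB : (1 - PowerSeries.X) * (d⁄dX ℝ) B
      = PowerSeries.C (-(c-a-b)) * B := by
    rw [derivative_eq]; exact binom_ODE (c-a-b)
  have hB2 : (1 - PowerSeries.X) * (d⁄dX ℝ) ((d⁄dX ℝ) B)
      = (1 + PowerSeries.C (-(c-a-b))) * (d⁄dX ℝ) B := by
    have hd := congrArg (d⁄dX ℝ) hB
    rw [Derivation.leibniz, Derivation.leibniz] at hd
    simp only [smul_eq_mul, map_sub, Derivation.map_one_eq_zero, derivative_X,
      derivative_C, mul_zero, zero_sub, add_zero, mul_neg, mul_one] at hd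
    linear_combination hd
  have hD1 : (d⁄dX ℝ) (B * u) = B * (d⁄dX ℝ) u + u * (d⁄dX ℝ) B := by
    rw [Derivation.leibniz, smul_eq_mul, smul_eq_mul]
  have hD2 : (d⁄dX ℝ) ((d⁄dX ℝ) (B * u))
      = B * (d⁄dX ℝ) ((d⁄dX ℝ) u) + (d⁄dX ℝ) u * (d⁄dX ℝ) B
        + (u * (d⁄dX ℝ) ((d⁄dX ℝ) B) + (d⁄dX ℝ) B * (d⁄dX ℝ) u) := by
    rw [hD1, map_add, Derivation.leibniz, Derivation.leibniz, smul_eq_mul, smul_eq_mul,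
      smul_eq_mul, smul_eq_mul]
  have key : (1 - PowerSeries.X) * Dop a b c (B * u) = 0 := by
    rw [Dop, ← derivative_eq, ← derivative_eq, hD2]
    rw [hD1]
    rw [Dop, ← derivative_eq, ← derivative_eq] at hu
    simp only [map_sub, map_add, map_mul, map_neg, map_one] at hu hB hB2 ⊢
    linear_combination
      (2 * PowerSeries.X * (1 - PowerSeries.X) * ((d⁄dX ℝ) u)
        + (PowerSeries.C c - (PowerSeries.C a + PowerSeries.C b + 1) * PowerSeries.X) * u
        + PowerSeries.X * u * (1 - (PowerSeries.C c - PowerSeries.C a - PowerSeries.C b))) * hB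
      + (PowerSeries.X * (1 - PowerSeries.X) * u) * hB2
      + ((1 - PowerSeries.X) * B) * hu
  rcases mul_eq_zero.mp key with h | h
  · exact absurd h one_sub_X_ne_zero
  · exact h

end HP
namespace HP

lemma descPoch_smeval_eq_prod (a : ℝ) (k : ℕ) :
    (descPochhammer ℤ k).smeval a = ∏ i ∈ Finset.range k, (a - i) := by
  induction k with
  | zero => simp [descPochhammer_zero, Polynomial.smeval_one]
  | succ k ih =>
    rw [descPochhammer_succ_right, Polynomial.smeval_mul, ih, Finset.prod_range_succ]
    congr 1
    rw [Polynomial.smeval_sub, Polynomial.smeval_X, Polynomial.smeval_natCast]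
    simp

lemma gchoose_eq_ringChoose (a : ℝ) (k : ℕ) : gchoose a k = Ring.choose a k := by
  have h := Ring.descPochhammer_eq_factorial_smul_choose (R := ℝ) a k
  rw [descPoch_smeval_eq_prod, nsmul_eq_mul] at h
  rw [gchoose, h]
  have : ((k.factorial : ℕ) : ℝ) ≠ 0 := by positivity
  field_simp

/-- Chu–Vandermonde for generalized binomial coefficients over ℝ. -/
lemma gchoose_vandermonde (x y : ℝ) (K : ℕ) :
    ∑ j ∈ Finset.range (K+1), gchoose x j * gchoose y (K-j) = gchoose (x+y) K := by
  simp only [gchoose_eq_ringChoose]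
  rw [Ring.add_choose_eq K (Commute.all x y), Finset.Nat.sum_antidiagonal_eq_sum_range_succ_mk]

lemma binom_zero : binomOneSub (0:ℝ) = 1 := by
  ext k
  rw [coeff_binom, PowerSeries.coeff_one]
  rcases k with _ | k
  · simp
  · rw [if_neg (by omega)]
    rw [bc, gchoose]
    rw [Finset.prod_eq_zero (Finset.mem_range.mpr (Nat.succ_pos k))]
    · simp
    · simp

lemma binom_mul (ν μ : ℝ) :
    binomOneSub ν * binomOneSub μ = binomOneSub (ν + μ) := by
  ext K
  rw [PowerSeries.coeff_mul, Finset.Nat.sum_antidiagonal_eq_sum_range_succ_mk, coeff_binom]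
  have : ∀ j ∈ Finset.range (K+1),
      PowerSeries.coeff j (binomOneSub ν) * PowerSeries.coeff (K-j) (binomOneSub μ)
        = (gchoose ν j * gchoose μ (K-j)) * (-1)^K := by
    intro j hj
    rw [coeff_binom, coeff_binom, bc, bc]
    have hjK : j + (K - j) = K := by
      have := Finset.mem_range.mp hj; omega
    have hp : (-1:ℝ)^j * (-1:ℝ)^(K-j) = (-1:ℝ)^K := by rw [← pow_add, hjK]
    linear_combination (gchoose ν j * gchoose μ (K-j)) * hp
  rw [Finset.sum_congr rfl this, ← Finset.sum_mul, gchoose_vandermonde, bc]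

lemma prod_cast_sub (r k : ℕ) :
    ∏ i ∈ Finset.range k, ((r:ℝ) - i) = (r.descFactorial k : ℝ) := by
  induction k with
  | zero => simp
  | succ k ih =>
    rw [Finset.prod_range_succ, ih, Nat.descFactorial_succ]
    rcases le_or_gt (k+1) r with h | h
    · push_cast [Nat.cast_sub (by omega : k ≤ r)]
      ring
    · rcases eq_or_lt_of_le (by omega : r ≤ k) with he | hlt
      · subst he
        simp
      · rw [Nat.descFactorial_eq_zero_iff_lt.mpr hlt]
        simp

lemma gchoose_nat (r k : ℕ) : gchoose (r:ℝ) k = (r.choose k : ℝ) := by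
  rw [gchoose, prod_cast_sub, Nat.descFactorial_eq_factorial_mul_choose]
  have : ((k.factorial : ℕ) : ℝ) ≠ 0 := by positivity
  push_cast
  field_simp

lemma gchoose_nat_eq_zero {r j : ℕ} (h : r < j) : gchoose (r:ℝ) j = 0 := by
  rw [gchoose, prod_cast_sub, Nat.descFactorial_eq_zero_iff_lt.mpr h]
  simp

end HP
namespace HP

noncomputable def LHSdef (m n : ℕ) (ν : ℝ) : PowerSeries ℝ :=
  hypSeries (-ν - n) (-(m : ℝ)) (-(m : ℝ) - n) -
    binomOneSub ν * hypSeries (ν - m) (-(n : ℝ)) (-(m : ℝ) - n)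

lemma cast_eq_c (m n : ℕ) : -(((m+n : ℕ)):ℝ) = -(m:ℝ) - n := by push_cast; ring

/-- recurrence for the coefficients of F1 -/
lemma rec_F1 (m n : ℕ) (ν : ℝ) (k : ℕ) :
    ((k:ℝ)+1) * ((k:ℝ) + (-(m:ℝ)-n)) *
      PowerSeries.coeff (k+1) (hypSeries (-ν - n) (-(m : ℝ)) (-(m : ℝ) - n))
    = ((k:ℝ) + (-ν-n)) * ((k:ℝ) + (-(m:ℝ))) *
      PowerSeries.coeff k (hypSeries (-ν - n) (-(m : ℝ)) (-(m : ℝ) - n)) := by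
  rw [coeff_hypSeries, coeff_hypSeries, ← cast_eq_c m n]
  exact hyp_rec_term (-ν - n) m (m+n) (by omega) k

/-- The product `(1-x)^ν · F2` is annihilated by the hypergeometric operator. -/
lemma Dop_BF2 (m n : ℕ) (ν : ℝ) :
    Dop (-ν - n) (-(m:ℝ)) (-(m:ℝ)-n)
      (binomOneSub ν * hypSeries (ν - m) (-(n : ℝ)) (-(m : ℝ) - n)) = 0 := by
  have hu : Dop ((-(m:ℝ)-n) - (-ν - n)) ((-(m:ℝ)-n) - (-(m:ℝ))) (-(m:ℝ)-n)
      (hypSeries (ν - m) (-(n : ℝ)) (-(m : ℝ) - n)) = 0 := by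
    rw [show ((-(m:ℝ)-n) - (-ν - n)) = ν - m by ring,
      show ((-(m:ℝ)-n) - (-(m:ℝ))) = -(n:ℝ) by ring]
    rw [Dop_eq_zero_iff]
    intro k
    rw [coeff_hypSeries, coeff_hypSeries, ← cast_eq_c m n]
    exact hyp_rec_term (ν - m) n (m+n) (by omega) k
  have h := Dop_mul_binom (-ν - n) (-(m:ℝ)) (-(m:ℝ)-n) _ hu
  rwa [show ((-(m:ℝ)-n) - (-ν - n) - (-(m:ℝ))) = ν by ring] at h

/-- recurrence for coefficients of the full left-hand side -/
lemma rec_LHS (m n : ℕ) (ν : ℝ) (k : ℕ) :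
    ((k:ℝ)+1) * ((k:ℝ) + (-(m:ℝ)-n)) * PowerSeries.coeff (k+1) (LHSdef m n ν)
    = ((k:ℝ) + (-ν-n)) * ((k:ℝ) + (-(m:ℝ))) * PowerSeries.coeff k (LHSdef m n ν) := by
  have h2 := (Dop_eq_zero_iff _ _ _ _).mp (Dop_BF2 m n ν) k
  have h1 := rec_F1 m n ν k
  rw [LHSdef, map_sub, map_sub]
  ring_nf
  ring_nf at h1 h2
  linarith

lemma coeff_LHS_vanish (m n : ℕ) (ν : ℝ) : ∀ t : ℕ, t ≤ m + n →
    PowerSeries.coeff t (LHSdef m n ν) = 0 := by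
  intro t
  induction t with
  | zero =>
    intro _
    rw [LHSdef, map_sub, coeff_hypSeries, PowerSeries.coeff_mul]
    simp [coeff_hypSeries, coeff_binom]
  | succ t ih =>
    intro ht
    have h := rec_LHS m n ν t
    rw [ih (by omega)] at h
    have h1 : ((t:ℝ)+1) ≠ 0 := by positivity
    have h2 : (t:ℝ) + (-(m:ℝ)-n) ≠ 0 := by
      have : (t:ℝ) ≠ ((m+n:ℕ):ℝ) := Nat.cast_injective.ne (by omega)
      push_cast at this
      intro hc; exact this (by linarith)
    have := mul_ne_zero h1 h2
    rcases mul_eq_zero.mp (by linarith [h] : ((t:ℝ)+1) * ((t:ℝ) + (-(m:ℝ)-n)) *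
        PowerSeries.coeff (t+1) (LHSdef m n ν) = 0) with hc | hc
    · exact absurd hc this
    · exact hc

noncomputable def rhoFun (m n : ℕ) (ν : ℝ) : ℝ :=
  -∑ j ∈ Finset.range (m+n+2), bc ν j * hypCoeff (ν - m) (-(n:ℝ)) (-(m:ℝ)-n) (m+n+1-j)

lemma coeff_LHS_top (m n : ℕ) (ν : ℝ) :
    PowerSeries.coeff (m+n+1) (LHSdef m n ν) = rhoFun m n ν := by
  rw [LHSdef, map_sub, coeff_hypSeries, PowerSeries.coeff_mul,
    Finset.Nat.sum_antidiagonal_eq_sum_range_succ_mk]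
  have h0 : hypCoeff (-ν - n) (-(m:ℝ)) (-(m:ℝ)-n) (m+n+1) = 0 := by
    rw [hypCoeff, poch_neg_nat_eq_zero (show m < m+n+1 by omega), mul_zero, zero_div]
  rw [h0, rhoFun]
  rw [show m+n+1+1 = m+n+2 by omega]
  rw [zero_sub, neg_inj]
  apply Finset.sum_congr rfl
  intro j hj
  rw [coeff_binom, coeff_hypSeries]

lemma hypCoeff_term_zero (x : ℝ) (m n k : ℕ) (hk : n < k) :
    hypCoeff x (-(n:ℝ)) (-(m:ℝ)-n) k = 0 := by
  rw [hypCoeff, poch_neg_nat_eq_zero hk, mul_zero, zero_div]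

/-- symmetry: `ρ(m,n,ν) = -ρ(n,m,-ν)` -/
lemma rho_symm (m n : ℕ) (ν : ℝ) : rhoFun m n ν = - rhoFun n m (-ν) := by
  have hser : binomOneSub ν * LHSdef n m (-ν) = - LHSdef m n ν := by
    rw [LHSdef, LHSdef]
    rw [show (-(-ν) - (m:ℝ)) = ν - m by ring, show (-(n:ℝ) - m) = -(m:ℝ) - n by ring,
      show (-ν - (n:ℝ)) = -ν - n by ring]
    rw [mul_sub, ← mul_assoc, binom_mul, add_neg_cancel, binom_zero, one_mul]
    ring
  have h := congrArg (PowerSeries.coeff (m+n+1)) hser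
  rw [map_neg, coeff_LHS_top, PowerSeries.coeff_mul,
    Finset.Nat.sum_antidiagonal_eq_sum_range_succ_mk] at h
  rw [Finset.sum_eq_single 0 ?side ?notmem] at h
  · rw [coeff_binom, bc_zero, one_mul, Nat.sub_zero] at h
    have e : PowerSeries.coeff (m+n+1) (LHSdef n m (-ν)) = rhoFun n m (-ν) := by
      rw [show m+n+1 = n+m+1 by omega]
      exact coeff_LHS_top n m (-ν)
    rw [e] at h
    linarith
  · intro j hj hj0
    apply mul_eq_zero_of_right
    apply coeff_LHS_vanish n m (-ν)
    omega
  · intro h0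
    exact absurd (Finset.mem_range.mpr (by omega)) h0

end HP
namespace HP

lemma poch_neg_cast (N q : ℕ) :
    poch (-(N:ℝ)) q = (-1)^q * (N.descFactorial q : ℝ) := by
  rw [poch, ← prod_cast_sub]
  calc ∏ i ∈ Finset.range q, (-(N:ℝ) + i)
      = ∏ i ∈ Finset.range q, (-1) * ((N:ℝ) - i) := by
        apply Finset.prod_congr rfl; intros; ring
    _ = (-1)^q * ∏ i ∈ Finset.range q, ((N:ℝ) - i) := by
        rw [Finset.prod_mul_distrib, Finset.prod_const, Finset.card_range]
    _ = _ := rfl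

lemma poch_one (n : ℕ) : poch 1 n = (n.factorial : ℝ) := by
  induction n with
  | zero => simp
  | succ n ih =>
    rw [poch_succ, ih, Nat.factorial_succ]
    push_cast
    ring

noncomputable def tauFun (m n : ℕ) (ν : ℝ) : ℝ :=
  (-1)^m * gchoose ((n:ℝ) + ν) (m+n+1) / ((m+n).choose m)

lemma rho_nat_zero (m n r : ℕ) (hr : r ≤ m) : rhoFun m n (r:ℝ) = 0 := by
  rw [rhoFun, neg_eq_zero]
  apply Finset.sum_eq_zero
  intro j hj
  rcases le_or_gt j m with h | h
  · apply mul_eq_zero_of_right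
    exact hypCoeff_term_zero _ m n _ (by omega)
  · apply mul_eq_zero_of_left
    rw [bc, gchoose_nat_eq_zero (by omega : r < j), zero_mul]

lemma tau_nat_zero (m n s : ℕ) (hs : s ≤ m + n) {ν : ℝ} (hν : (n:ℝ) + ν = (s:ℝ)) :
    tauFun m n ν = 0 := by
  rw [tauFun, hν, gchoose_nat_eq_zero (by omega : s < m+n+1), mul_zero, zero_div]

lemma rho_top (m n : ℕ) : rhoFun m n ((m:ℝ)+1) = (-1)^m / ((m+n).choose m) := by
  rw [rhoFun]
  rw [Finset.sum_eq_single (m+1)]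
  · -- main term
    rw [show m+n+1-(m+1) = n by omega]
    rw [bc, show ((m:ℝ)+1) = ((m+1:ℕ):ℝ) by push_cast; ring, gchoose_nat, Nat.choose_self]
    rw [show (((m+1:ℕ)):ℝ) - (m:ℝ) = 1 by push_cast; ring]
    rw [hypCoeff, poch_one, show (-(m:ℝ)-n) = -(((m+n:ℕ)):ℝ) by push_cast; ring,
      poch_neg_cast, poch_neg_cast, Nat.descFactorial_self,
      Nat.descFactorial_eq_factorial_mul_choose]
    have h1 : ((n.factorial : ℕ) : ℝ) ≠ 0 := by positivity
    have h2 : (((m+n).choose n : ℕ) : ℝ) ≠ 0 := by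
      have := Nat.choose_pos (show n ≤ m+n by omega)
      positivity
    have h3 : ((-1:ℝ))^n ≠ 0 := by
      apply pow_ne_zero; norm_num
    rw [show (m+n).choose n = (m+n).choose m from (Nat.choose_symm_add).symm ▸ rfl]
    have hC : (((m+n).choose m : ℕ) : ℝ) ≠ 0 := by
      rw [Nat.choose_symm_add]; exact h2
    push_cast
    rw [neg_eq_iff_eq_neg, mul_div_assoc', ← neg_div,
      div_eq_div_iff (mul_ne_zero (mul_ne_zero h3 (mul_ne_zero h1 hC)) h1) hC]
    ring
  · intro j hj hj0
    rcases le_or_gt j m with h | h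
    · apply mul_eq_zero_of_right
      exact hypCoeff_term_zero _ m n _ (by omega)
    · apply mul_eq_zero_of_left
      rw [bc, show ((m:ℝ)+1) = ((m+1:ℕ):ℝ) by push_cast; ring,
        gchoose_nat_eq_zero (by omega : m+1 < j), zero_mul]
  · intro h0
    exact absurd (Finset.mem_range.mpr (by omega)) h0

lemma tau_top (m n : ℕ) : tauFun m n ((m:ℝ)+1) = (-1)^m / ((m+n).choose m) := by
  rw [tauFun, show (n:ℝ) + ((m:ℝ)+1) = ((m+n+1:ℕ):ℝ) by push_cast; ring,
    gchoose_nat, Nat.choose_self]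
  norm_num

end HP
namespace HP

noncomputable def gchoosePoly (k : ℕ) : Polynomial ℝ :=
  Polynomial.C (((k.factorial : ℕ) : ℝ)⁻¹) *
    ∏ i ∈ Finset.range k, (Polynomial.X - Polynomial.C (i:ℝ))

lemma gchoosePoly_eval (k : ℕ) (ν : ℝ) : (gchoosePoly k).eval ν = gchoose ν k := by
  rw [gchoosePoly, gchoose, Polynomial.eval_mul, Polynomial.eval_C, Polynomial.eval_prod,
    div_eq_mul_inv, mul_comm]
  congr 1
  apply Finset.prod_congr rfl
  intros; simp

lemma gchoosePoly_natDegree (k : ℕ) : (gchoosePoly k).natDegree ≤ k := by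
  refine le_trans (Polynomial.natDegree_C_mul_le _ _) ?_
  refine le_trans (Polynomial.natDegree_prod_le _ _) ?_
  refine le_trans (Finset.sum_le_sum (fun i _ =>
    le_of_eq (Polynomial.natDegree_X_sub_C (i:ℝ)))) ?_
  simp

noncomputable def pochPoly (s : ℝ) (k : ℕ) : Polynomial ℝ :=
  ∏ i ∈ Finset.range k, (Polynomial.X + Polynomial.C (s + i))

lemma pochPoly_eval (s : ℝ) (k : ℕ) (ν : ℝ) : (pochPoly s k).eval ν = poch (ν + s) k := by
  rw [pochPoly, poch, Polynomial.eval_prod]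
  apply Finset.prod_congr rfl
  intros; simp; ring

lemma pochPoly_natDegree (s : ℝ) (k : ℕ) : (pochPoly s k).natDegree ≤ k := by
  refine le_trans (Polynomial.natDegree_prod_le _ _) ?_
  refine le_trans (Finset.sum_le_sum (fun i _ =>
    le_of_eq (Polynomial.natDegree_X_add_C (s + i)))) ?_
  simp

noncomputable def rhoPoly (m n : ℕ) : Polynomial ℝ :=
  -∑ j ∈ Finset.range (m+n+2), (Polynomial.C ((-1:ℝ)^j) * gchoosePoly j) *
      (pochPoly (-(m:ℝ)) (m+n+1-j) *
        Polynomial.C (poch (-(n:ℝ)) (m+n+1-j) /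
          (poch (-(m:ℝ)-n) (m+n+1-j) * ((m+n+1-j).factorial : ℕ))))

lemma rhoPoly_eval (m n : ℕ) (ν : ℝ) : (rhoPoly m n).eval ν = rhoFun m n ν := by
  rw [rhoPoly, rhoFun, Polynomial.eval_neg, Polynomial.eval_finset_sum, neg_inj]
  apply Finset.sum_congr rfl
  intro j hj
  rw [Polynomial.eval_mul, Polynomial.eval_mul, Polynomial.eval_mul, Polynomial.eval_C,
    Polynomial.eval_C, gchoosePoly_eval, pochPoly_eval, bc, hypCoeff,
    show ν + -(m:ℝ) = ν - m by ring, mul_div_assoc]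
  ring

lemma rhoPoly_natDegree (m n : ℕ) : (rhoPoly m n).natDegree ≤ m+n+1 := by
  rw [rhoPoly, Polynomial.natDegree_neg]
  apply Polynomial.natDegree_sum_le_of_forall_le
  intro j hj
  refine le_trans (Polynomial.natDegree_mul_le) ?_
  have h1 : (Polynomial.C ((-1:ℝ)^j) * gchoosePoly j).natDegree ≤ j :=
    le_trans (Polynomial.natDegree_C_mul_le _ _) (gchoosePoly_natDegree j)
  have h2 : (pochPoly (-(m:ℝ)) (m+n+1-j) * Polynomial.C (poch (-(n:ℝ)) (m+n+1-j) /
      (poch (-(m:ℝ)-n) (m+n+1-j) * ((m+n+1-j).factorial : ℕ)))).natDegree ≤ m+n+1-j := by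
    refine le_trans (Polynomial.natDegree_mul_le) ?_
    rw [Polynomial.natDegree_C, add_zero]
    exact pochPoly_natDegree _ _
  have hj' := Finset.mem_range.mp hj
  have := add_le_add h1 h2
  omega

noncomputable def tauPoly (m n : ℕ) : Polynomial ℝ :=
  Polynomial.C ((-1:ℝ)^m / ((m+n).choose m) * (((m+n+1).factorial : ℕ):ℝ)⁻¹) *
    ∏ i ∈ Finset.range (m+n+1), (Polynomial.X + Polynomial.C ((n:ℝ) - i))

lemma tauPoly_eval (m n : ℕ) (ν : ℝ) : (tauPoly m n).eval ν = tauFun m n ν := by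
  rw [tauPoly, tauFun, Polynomial.eval_mul, Polynomial.eval_C, Polynomial.eval_prod, gchoose]
  have hp : ∏ j ∈ Finset.range (m+n+1), Polynomial.eval ν (Polynomial.X + Polynomial.C ((n:ℝ) - j))
      = ∏ i ∈ Finset.range (m+n+1), ((n:ℝ) + ν - i) :=
    Finset.prod_congr rfl (fun i _ => by simp; ring)
  rw [hp]
  rw [div_eq_mul_inv, div_eq_mul_inv, div_eq_mul_inv]
  ring

lemma tauPoly_natDegree (m n : ℕ) : (tauPoly m n).natDegree ≤ m+n+1 := by
  refine le_trans (Polynomial.natDegree_C_mul_le _ _) ?_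
  refine le_trans (Polynomial.natDegree_prod_le _ _) ?_
  refine le_trans (Finset.sum_le_sum (fun i _ =>
    le_of_eq (Polynomial.natDegree_X_add_C ((n:ℝ) - i)))) ?_
  simp

lemma rho_eq_tau (m n : ℕ) (ν : ℝ) : rhoFun m n ν = tauFun m n ν := by
  have hinj : Function.Injective (fun i : ℕ => (i:ℝ) - n) := by
    intro i j hij
    simp only at hij
    have : (i:ℝ) = j := by linarith
    exact Nat.cast_injective this
  have hpoly : rhoPoly m n - tauPoly m n = 0 := by
    apply Polynomial.eq_zero_of_natDegree_lt_card_of_eval_eq_zero' _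
      (Finset.image (fun i : ℕ => (i:ℝ) - n) (Finset.range (m+n+2)))
    · intro x hx
      obtain ⟨i, hi, rfl⟩ := Finset.mem_image.mp hx
      have hi' := Finset.mem_range.mp hi
      rw [Polynomial.eval_sub, rhoPoly_eval, tauPoly_eval, sub_eq_zero]
      rcases lt_or_ge i n with h | h
      · have e : (i:ℝ) - n = -(((n - i:ℕ)):ℝ) := by
          push_cast [Nat.cast_sub (le_of_lt h)]; ring
        rw [e, rho_symm, neg_neg, rho_nat_zero n m (n-i) (by omega), neg_zero]
        rw [tau_nat_zero m n i (by omega) (by push_cast [Nat.cast_sub (le_of_lt h)]; ring)]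
      rcases lt_or_ge i (m+n+1) with h2 | h2
      · have e : (i:ℝ) - n = (((i - n:ℕ)):ℝ) := by push_cast [Nat.cast_sub h]; ring
        rw [e, rho_nat_zero m n (i-n) (by omega)]
        rw [tau_nat_zero m n i (by omega) (by push_cast [Nat.cast_sub h]; ring)]
      · have e : (i:ℝ) - n = (m:ℝ)+1 := by
          have : i = m+n+1 := by omega
          subst this; push_cast; ring
        rw [e, rho_top, tau_top]
    · rw [Finset.card_image_of_injective _ hinj, Finset.card_range]
      refine lt_of_le_of_lt (Polynomial.natDegree_sub_le _ _) ?_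
      have := rhoPoly_natDegree m n
      have := tauPoly_natDegree m n
      omega
  have h := congrArg (Polynomial.eval ν) hpoly
  rw [Polynomial.eval_sub, rhoPoly_eval, tauPoly_eval, Polynomial.eval_zero, sub_eq_zero] at h
  exact h

end HP
namespace HP

noncomputable def RHSdef (m n : ℕ) (ν : ℝ) : PowerSeries ℝ :=
  PowerSeries.C ((-1) ^ m * gchoose ((n : ℝ) + ν) (m + n + 1) / ((m + n).choose m)) *
    (PowerSeries.X ^ (m + n + 1) *
      hypSeries (-ν + m + 1) ((n : ℝ) + 1) ((m : ℝ) + n + 2))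

lemma coeff_RHS (m n : ℕ) (ν : ℝ) (t : ℕ) :
    PowerSeries.coeff t (RHSdef m n ν) = if m+n+1 ≤ t then
      tauFun m n ν * hypCoeff (-ν + m + 1) ((n : ℝ) + 1) ((m : ℝ) + n + 2) (t - (m+n+1))
      else 0 := by
  rw [RHSdef, PowerSeries.coeff_C_mul, PowerSeries.coeff_X_pow_mul', mul_ite, mul_zero]
  split_ifs with h
  · rw [coeff_hypSeries, tauFun]
  · rfl

lemma rec_RHS (m n : ℕ) (ν : ℝ) (k : ℕ) :
    ((k:ℝ)+1) * ((k:ℝ) + (-(m:ℝ)-n)) * PowerSeries.coeff (k+1) (RHSdef m n ν)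
    = ((k:ℝ) + (-ν-n)) * ((k:ℝ) + (-(m:ℝ))) * PowerSeries.coeff k (RHSdef m n ν) := by
  rcases lt_trichotomy (k+1) (m+n+1) with h | h | h
  · rw [coeff_RHS, coeff_RHS, if_neg (by omega), if_neg (by omega), mul_zero, mul_zero]
  · have hk : k = m+n := by omega
    subst hk
    rw [coeff_RHS, coeff_RHS, if_pos (le_refl (m+n+1)), if_neg (by omega), mul_zero]
    have : ((m+n:ℕ):ℝ) + (-(m:ℝ)-n) = 0 := by push_cast; ring
    rw [this, mul_zero, zero_mul]
  · have hc : ∀ i : ℕ, ((m:ℝ) + n + 2) + i ≠ 0 := by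
      intro i; positivity
    obtain ⟨j, hj⟩ : ∃ j, k = m+n+1+j := ⟨k - (m+n+1), by omega⟩
    subst hj
    rw [coeff_RHS, coeff_RHS, if_pos (by omega), if_pos (by omega),
      show m+n+1+j+1 - (m+n+1) = j+1 by omega, show m+n+1+j - (m+n+1) = j by omega]
    have hr := hyp_rec_pos (-ν + m + 1) ((n:ℝ)+1) ((m:ℝ)+n+2) hc j
    push_cast
    push_cast at hr
    linear_combination (tauFun m n ν) * hr

theorem LHS_eq_RHS (m n : ℕ) (ν : ℝ) : LHSdef m n ν = RHSdef m n ν := by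
  ext t
  induction t with
  | zero =>
    rw [coeff_LHS_vanish m n ν 0 (by omega), coeff_RHS, if_neg (by omega)]
  | succ t ih =>
    rcases lt_trichotomy (t+1) (m+n+1) with h | h | h
    · rw [coeff_LHS_vanish m n ν (t+1) (by omega), coeff_RHS, if_neg (by omega)]
    · rw [h, coeff_LHS_top, rho_eq_tau, coeff_RHS, if_pos le_rfl, Nat.sub_self,
        hypCoeff_zero, mul_one]
    · have hL := rec_LHS m n ν t
      have hR := rec_RHS m n ν t
      rw [ih] at hL
      have hA : ((t:ℝ)+1) * ((t:ℝ) + (-(m:ℝ)-n)) ≠ 0 := by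
        apply mul_ne_zero
        · positivity
        · have : (t:ℝ) ≠ ((m+n:ℕ):ℝ) := Nat.cast_injective.ne (by omega)
          push_cast at this
          intro hcon; exact this (by linarith)
      exact mul_left_cancel₀ hA (hL.trans hR.symm)

end HP


/-- **The Hermite–Padé identity for binomial functions:**
`₂F₁(−ν−n, −m; −m−n; x) − (1−x)^ν · ₂F₁(ν−m, −n; −m−n; x)
  = (−1)^m · [C(n+ν, m+n+1)/C(m+n, m)] · x^{m+n+1} · ₂F₁(−ν+m+1, n+1; m+n+2; x)`
as formal power series in `x` over `ℝ`. -/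
theorem stmt_2 (ν : ℝ) (m n : ℕ) (hν : ∀ j : ℕ, ν ≠ -((j : ℝ) + 1)) :
    hypSeries (-ν - n) (-(m : ℝ)) (-(m : ℝ) - n) -
        binomOneSub ν * hypSeries (ν - m) (-(n : ℝ)) (-(m : ℝ) - n) =
      (PowerSeries.C : ℝ →+* PowerSeries ℝ)
          ((-1) ^ m * gchoose ((n : ℝ) + ν) (m + n + 1) / ((m + n).choose m)) *
        (PowerSeries.X ^ (m + n + 1) *
          hypSeries (-ν + m + 1) ((n : ℝ) + 1) ((m : ℝ) + n + 2)) := by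
  exact HP.LHS_eq_RHS m n ν
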